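/- Let G be a PLB graph on n vertices with exponent γ > 2 and constant c₀. Then the number of edges of G is at most C · n for a constant C depending only on c₀ and γ. -/

import Mathlib

/-- The number of vertices of `G` of degree exactly `d`. -/
noncomputable def degCount {V : Type*} [Fintype V] (G : SimpleGraph V) (d : ℕ) : ℕ :=
  {v : V | {u | G.Adj v u}.ncard = d}.ncard

/-- `G` is power-law bounded with exponent `γ` and constant `c₀` if for every `r ≥ 0`,
`Σ_{d=2^r}^{2^(r+1)} n(d) ≤ c₀ n Σ_{d=2^r}^{2^(r+1)} d^(-γ)`. -/
def IsPLB {V : Type*} [Fintype V] (G : SimpleGraph V) (γ c₀ : ℝ) : Prop :=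
  ∀ r : ℕ,
    (∑ d ∈ Finset.Icc (2 ^ r : ℕ) (2 ^ (r + 1)), (degCount G d : ℝ)) ≤
      c₀ * (Fintype.card V : ℝ) *
        ∑ d ∈ Finset.Icc (2 ^ r : ℕ) (2 ^ (r + 1)), (d : ℝ) ^ (-γ)

open Finset in
lemma sum_biUnion_le_sum_sum {s : Finset ℕ} {t : ℕ → Finset ℕ} {f : ℕ → ℝ}
    (hf : ∀ x, 0 ≤ f x) :
    ∑ x ∈ s.biUnion t, f x ≤ ∑ i ∈ s, ∑ x ∈ t i, f x := by
  classical
  induction s using Finset.induction_on with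
  | empty => simp
  | @insert a s ha ih =>
    rw [Finset.biUnion_insert, Finset.sum_insert ha]
    have h1 : ∑ x ∈ t a ∪ s.biUnion t, f x
        = ∑ x ∈ t a, f x + ∑ x ∈ (s.biUnion t) \ t a, f x := by
      rw [← Finset.sum_union Finset.sdiff_disjoint.symm]
      congr 1
      rw [Finset.union_sdiff_self_eq_union]
    rw [h1]
    have h2 : ∑ x ∈ (s.biUnion t) \ t a, f x ≤ ∑ x ∈ s.biUnion t, f x :=
      Finset.sum_le_sum_of_subset_of_nonneg (Finset.sdiff_subset) (fun x _ _ => hf x)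
    linarith [ih]

/-- A PLB graph with exponent `γ > 2` has at most `C n` edges, for a constant `C`
depending only on `c₀` and `γ`. -/
theorem plb_edge_bound (γ c₀ : ℝ) (hγ : 2 < γ) (hc₀ : 0 < c₀) :
    ∃ C : ℝ, 0 < C ∧
      ∀ (V : Type) [Fintype V] (G : SimpleGraph V), IsPLB G γ c₀ →
        (G.edgeSet.ncard : ℝ) ≤ C * (Fintype.card V : ℝ) := by
  classical
  set q : ℝ := (2 : ℝ) ^ (2 - γ) with hqdef
  have hq0 : 0 < q := Real.rpow_pos_of_pos (by norm_num) _
  have hq1 : q < 1 := Real.rpow_lt_one_of_one_lt_of_neg (by norm_num) (by linarith)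
  have h1q : (0 : ℝ) < 1 - q := by linarith
  refine ⟨2 * c₀ / (1 - q), by positivity, ?_⟩
  intro V _ G hPLB
  classical
  set n := Fintype.card V with hn
  -- degCount in terms of degrees
  have hdv : ∀ v : V, ({u | G.Adj v u} : Set V).ncard = G.degree v := by
    intro v
    rw [Set.ncard_eq_toFinset_card', Set.toFinset_setOf]
    simp [SimpleGraph.degree, SimpleGraph.neighborFinset_eq_filter]
  have hdegCount : ∀ d, degCount G d = (Finset.univ.filter (fun v => G.degree v = d)).card := by
    intro d
    unfold degCount
    rw [Set.ncard_eq_toFinset_card', Set.toFinset_setOf]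
    congr 1
    apply Finset.filter_congr
    intro v _
    simp [hdv v]
  -- edge count via handshake
  have hedge : (G.edgeSet.ncard : ℝ) = (G.edgeFinset.card : ℝ) := by
    rw [← SimpleGraph.coe_edgeFinset, Set.ncard_coe_finset]
  have hhand : (∑ v : V, G.degree v) = 2 * G.edgeFinset.card :=
    SimpleGraph.sum_degrees_eq_twice_card_edges G
  -- fiberwise sum
  have hfib : (∑ v : V, G.degree v)
      = ∑ d ∈ Finset.range n, d * degCount G d := by
    rw [← Finset.sum_fiberwise_of_maps_to (g := fun v => G.degree v)
      (t := Finset.range n) (fun v _ => Finset.mem_range.mpr (G.degree_lt_card_verts v))]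
    apply Finset.sum_congr rfl
    intro d _
    rw [hdegCount d]
    rw [Finset.sum_congr rfl (fun v hv => (Finset.mem_filter.mp hv).2)]
    rw [Finset.sum_const, smul_eq_mul, mul_comm]
  have hN : 2 * G.edgeFinset.card = ∑ d ∈ Finset.range n, d * degCount G d := by
    rw [← hhand, hfib]
  have hfibR : (2 : ℝ) * (G.edgeFinset.card : ℝ)
      = ∑ d ∈ Finset.range n, (d : ℝ) * (degCount G d : ℝ) := by
    exact_mod_cast hN
  -- erase 0
  have herase : ∑ d ∈ Finset.range n, (d : ℝ) * (degCount G d : ℝ)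
      = ∑ d ∈ (Finset.range n).erase 0, (d : ℝ) * (degCount G d : ℝ) :=
    (Finset.sum_erase _ (by simp)).symm
  -- subset of biUnion
  have hsub : (Finset.range n).erase 0 ⊆
      (Finset.range n).biUnion (fun r => Finset.Icc (2 ^ r : ℕ) (2 ^ (r + 1))) := by
    intro d hd
    obtain ⟨hd0, hdn⟩ := Finset.mem_erase.mp hd
    rw [Finset.mem_range] at hdn
    refine Finset.mem_biUnion.mpr ⟨Nat.log 2 d, ?_, ?_⟩
    · rw [Finset.mem_range]
      have h1 : 2 ^ Nat.log 2 d ≤ d := Nat.pow_log_le_self 2 hd0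
      have h2 : Nat.log 2 d < 2 ^ Nat.log 2 d := Nat.lt_two_pow_self
      omega
    · rw [Finset.mem_Icc]
      exact ⟨Nat.pow_log_le_self 2 hd0,
        le_of_lt (Nat.lt_pow_succ_log_self (by norm_num) d)⟩
  have hnonneg : ∀ d : ℕ, (0 : ℝ) ≤ (d : ℝ) * (degCount G d : ℝ) := by
    intro d; positivity
  -- key block bound
  have hblock : ∀ r : ℕ,
      ∑ d ∈ Finset.Icc (2 ^ r : ℕ) (2 ^ (r + 1)), (d : ℝ) * (degCount G d : ℝ)
      ≤ 4 * c₀ * (n : ℝ) * q ^ r := by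
    intro r
    have h1 : ∑ d ∈ Finset.Icc (2 ^ r : ℕ) (2 ^ (r + 1)), (d : ℝ) * (degCount G d : ℝ)
        ≤ ((2 : ℝ) ^ (r + 1)) *
            ∑ d ∈ Finset.Icc (2 ^ r : ℕ) (2 ^ (r + 1)), (degCount G d : ℝ) := by
      rw [Finset.mul_sum]
      apply Finset.sum_le_sum
      intro d hd
      have hdle : (d : ℝ) ≤ (2 : ℝ) ^ (r + 1) := by
        exact_mod_cast (Finset.mem_Icc.mp hd).2
      exact mul_le_mul_of_nonneg_right hdle (by positivity)
    have h2 : ∑ d ∈ Finset.Icc (2 ^ r : ℕ) (2 ^ (r + 1)), (degCount G d : ℝ)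
        ≤ c₀ * (n : ℝ) *
            ∑ d ∈ Finset.Icc (2 ^ r : ℕ) (2 ^ (r + 1)), (d : ℝ) ^ (-γ) := hPLB r
    have h3 : ∑ d ∈ Finset.Icc (2 ^ r : ℕ) (2 ^ (r + 1)), (d : ℝ) ^ (-γ)
        ≤ ((2 : ℝ) ^ (r + 1)) * ((2 : ℝ) ^ r) ^ (-γ) := by
      have hcard : (Finset.Icc (2 ^ r : ℕ) (2 ^ (r + 1))).card = 2 ^ r + 1 := by
        rw [Nat.card_Icc, pow_succ]
        omega
      calc ∑ d ∈ Finset.Icc (2 ^ r : ℕ) (2 ^ (r + 1)), (d : ℝ) ^ (-γ)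
          ≤ (Finset.Icc (2 ^ r : ℕ) (2 ^ (r + 1))).card • (((2 : ℝ) ^ r) ^ (-γ)) := by
            apply Finset.sum_le_card_nsmul
            intro d hd
            have hd1 : (2 : ℕ) ^ r ≤ d := (Finset.mem_Icc.mp hd).1
            have h2r : (0 : ℝ) < (2 : ℝ) ^ r := by positivity
            exact Real.rpow_le_rpow_of_nonpos h2r (by exact_mod_cast hd1) (by linarith)
        _ ≤ ((2 : ℝ) ^ (r + 1)) * ((2 : ℝ) ^ r) ^ (-γ) := by
            rw [nsmul_eq_mul, hcard]
            apply mul_le_mul_of_nonneg_right _ (by positivity)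
            push_cast
            have h1r : (1 : ℝ) ≤ 2 ^ r := one_le_pow₀ (by norm_num)
            rw [pow_succ]
            linarith
    have hkey : ((2 : ℝ) ^ (r + 1)) * (((2 : ℝ) ^ (r + 1)) * ((2 : ℝ) ^ r) ^ (-γ))
        = 4 * q ^ r := by
      have e1 : ((2 : ℝ) ^ r) ^ (-γ) = (2 : ℝ) ^ ((r : ℝ) * (-γ)) := by
        rw [← Real.rpow_natCast (2 : ℝ) r, ← Real.rpow_mul (by norm_num)]
      have e2 : q ^ r = (2 : ℝ) ^ ((2 - γ) * (r : ℝ)) := by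
        rw [hqdef, ← Real.rpow_natCast ((2 : ℝ) ^ (2 - γ)) r,
          ← Real.rpow_mul (by norm_num)]
      have e3 : ((2 : ℝ) ^ (r + 1)) = (2 : ℝ) ^ (((r + 1 : ℕ)) : ℝ) := by
        rw [Real.rpow_natCast]
      have e4 : (4 : ℝ) = (2 : ℝ) ^ (2 : ℝ) := by
        rw [show (2 : ℝ) = ((2 : ℕ) : ℝ) by norm_num, Real.rpow_natCast]; norm_num
      rw [e1, e2, e3, e4, ← Real.rpow_add (by norm_num : (0:ℝ) < 2),
        ← Real.rpow_add (by norm_num : (0:ℝ) < 2),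
        ← Real.rpow_add (by norm_num : (0:ℝ) < 2)]
      congr 1
      push_cast
      ring
    calc ∑ d ∈ Finset.Icc (2 ^ r : ℕ) (2 ^ (r + 1)), (d : ℝ) * (degCount G d : ℝ)
        ≤ ((2 : ℝ) ^ (r + 1)) * (c₀ * (n : ℝ) *
            ∑ d ∈ Finset.Icc (2 ^ r : ℕ) (2 ^ (r + 1)), (d : ℝ) ^ (-γ)) :=
          h1.trans (mul_le_mul_of_nonneg_left h2 (by positivity))
      _ ≤ ((2 : ℝ) ^ (r + 1)) *
            (c₀ * (n : ℝ) * (((2 : ℝ) ^ (r + 1)) * ((2 : ℝ) ^ r) ^ (-γ))) :=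
          mul_le_mul_of_nonneg_left
            (mul_le_mul_of_nonneg_left h3 (by positivity)) (by positivity)
      _ = c₀ * (n : ℝ) *
            (((2 : ℝ) ^ (r + 1)) * (((2 : ℝ) ^ (r + 1)) * ((2 : ℝ) ^ r) ^ (-γ))) := by
          ring
      _ = 4 * c₀ * (n : ℝ) * q ^ r := by rw [hkey]; ring
  -- geometric sum bound
  have hgeom : ∑ r ∈ Finset.range n, q ^ r ≤ 1 / (1 - q) := by
    have hm := geom_sum_mul q n
    have hs : (∑ r ∈ Finset.range n, q ^ r) * (1 - q) = 1 - q ^ n := by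
      linear_combination -hm
    rw [le_div_iff₀ h1q]
    have hqn : (0 : ℝ) ≤ q ^ n := by positivity
    linarith
  -- putting things together
  have htotal : (2 : ℝ) * (G.edgeFinset.card : ℝ) ≤ 4 * c₀ * (n : ℝ) * (1 / (1 - q)) := by
    rw [hfibR, herase]
    calc ∑ d ∈ (Finset.range n).erase 0, (d : ℝ) * (degCount G d : ℝ)
        ≤ ∑ d ∈ (Finset.range n).biUnion (fun r => Finset.Icc (2 ^ r : ℕ) (2 ^ (r + 1))),
            (d : ℝ) * (degCount G d : ℝ) :=
          Finset.sum_le_sum_of_subset_of_nonneg hsub (fun d _ _ => hnonneg d)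
      _ ≤ ∑ r ∈ Finset.range n, ∑ d ∈ Finset.Icc (2 ^ r : ℕ) (2 ^ (r + 1)),
            (d : ℝ) * (degCount G d : ℝ) := sum_biUnion_le_sum_sum hnonneg
      _ ≤ ∑ r ∈ Finset.range n, 4 * c₀ * (n : ℝ) * q ^ r :=
          Finset.sum_le_sum (fun r _ => hblock r)
      _ = 4 * c₀ * (n : ℝ) * ∑ r ∈ Finset.range n, q ^ r := by rw [Finset.mul_sum]
      _ ≤ 4 * c₀ * (n : ℝ) * (1 / (1 - q)) :=
          mul_le_mul_of_nonneg_left hgeom (by positivity)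
  have htotal' : (2 : ℝ) * (G.edgeFinset.card : ℝ) * (1 - q) ≤ 4 * c₀ * (n : ℝ) := by
    rw [mul_one_div, le_div_iff₀ h1q] at htotal
    linarith
  rw [hedge, div_mul_eq_mul_div, le_div_iff₀ h1q]
  linarith
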